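/- (Validity of the multilayered bounds for the local controlled indirect effect.) Under the multilayered sample selection model with Assumption RCT, let R be a collection of constraints on response-type probability vectors, suppose the true vector (P(T=(d,d')))_{(d,d')} belongs to Θ_I(R), and suppose every Y_{z,d} takes values in [y_L, y_U] almost surely for fixed reals y_L ≤ y_U. Fix d, d' ∈ {1,…,K} with d ≠ d' and l ∈ {1,…,K}. Then: (a) if P(T=(l,d)) > 0, P(D=d | Z=1) > 0 and γ̲^{1,r}_{(l,d)} > 0, then E[F^{-1}_{Y|D=d,Z=1}(U) | U ≤ γ̲^{1,r}_{(l,d)}] − y_U ≤ LCIE(1, d, d' | (l,d)) ≤ E[F^{-1}_{Y|D=d,Z=1}(U) | U ≥ 1 − γ̲^{1,r}_{(l,d)}] − y_L; and (b) if P(T=(d,l)) > 0, P(D=d | Z=0) > 0 and γ̲^{0,r}_{(d,l)} > 0, then E[F^{-1}_{Y|D=d,Z=0}(U) | U ≤ γ̲^{0,r}_{(d,l)}] − y_U ≤ LCIE(0, d, d' | (d,l)) ≤ E[F^{-1}_{Y|D=d,Z=0}(U) | U ≥ 1 − γ̲^{0,r}_{(d,l)}] − y_L. -/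

import Mathlib

open MeasureTheory ProbabilityTheory

/-- Realized layer `D = D_1·Z + D_0·(1−Z)` (for `Z` valued in `{0,1}`). -/
def Dreal {Ω : Type*} (Z D0 D1 : Ω → ℕ) (ω : Ω) : ℕ :=
  D1 ω * Z ω + D0 ω * (1 - Z ω)

/-- Realized outcome `Y = Σ_{d=1}^K [Y_{1,d}·Z + Y_{0,d}·(1−Z)]·1{D=d}`. -/
noncomputable def Yreal {Ω : Type*} (K : ℕ) (Z D0 D1 : Ω → ℕ) (Y : ℕ → ℕ → Ω → ℝ)
    (ω : Ω) : ℝ :=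
  ∑ d ∈ Finset.Icc 1 K,
    (Y 1 d ω * (Z ω : ℝ) + Y 0 d ω * (1 - (Z ω : ℝ))) *
      (if Dreal Z D0 D1 ω = d then 1 else 0)

/-- Assumption RCT: the σ-algebra generated by the potential outcomes
`Y_{z,d}` (for `z ∈ {0,1}`, `d ∈ {1,…,K}`) together with `D_0, D_1` is
independent of (the σ-algebra generated by) `Z`. -/
def RCT {Ω : Type*} [MeasurableSpace Ω] (P : MeasureTheory.Measure Ω) (K : ℕ)
    (Y : ℕ → ℕ → Ω → ℝ) (D0 D1 Z : Ω → ℕ) : Prop :=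
  ProbabilityTheory.Indep
    ((⨆ z ∈ ({0, 1} : Set ℕ), ⨆ d ∈ Set.Icc 1 K, MeasurableSpace.comap (Y z d) inferInstance)
      ⊔ MeasurableSpace.comap D0 inferInstance ⊔ MeasurableSpace.comap D1 inferInstance)
    (MeasurableSpace.comap Z inferInstance) P

/-- CDF of a random variable `W` under a measure `μ`. -/
noncomputable def cdfOf {Ω : Type*} [MeasurableSpace Ω] (μ : MeasureTheory.Measure Ω)
    (W : Ω → ℝ) (w : ℝ) : ℝ :=
  (μ {ω | W ω ≤ w}).toReal

/-- Quantile function `F⁻¹(u) = inf {w : F(w) ≥ u}`. -/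
noncomputable def quantileFn (F : ℝ → ℝ) (u : ℝ) : ℝ := sInf {w | u ≤ F w}

/-- Lower truncated mean `E[F⁻¹(U) | U ≤ γ]` for `U` uniform on `[0,1]`,
written as `γ⁻¹ ∫_{(0,γ]} F⁻¹(u) du`. -/
noncomputable def lowerTrunc (F : ℝ → ℝ) (γ : ℝ) : ℝ :=
  γ⁻¹ * ∫ u in Set.Ioc (0 : ℝ) γ, quantileFn F u

/-- Upper truncated mean `E[F⁻¹(U) | U ≥ 1 − γ]` for `U` uniform on `[0,1]`,
written as `γ⁻¹ ∫_{[1−γ,1]} F⁻¹(u) du`. -/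
noncomputable def upperTrunc (F : ℝ → ℝ) (γ : ℝ) : ℝ :=
  γ⁻¹ * ∫ u in Set.Ico (1 - γ) (1 : ℝ), quantileFn F u

/-- Propensity score `P(D = d | Z = z)` as a real number. -/
noncomputable def propScore {Ω : Type*} [MeasurableSpace Ω] (P : MeasureTheory.Measure Ω)
    (Z D0 D1 : Ω → ℕ) (d z : ℕ) : ℝ :=
  ((P[|{ω | Z ω = z}]) {ω | Dreal Z D0 D1 ω = d}).toReal

/-- Identified set `Θ_I(R)` of response-type probability vectors: nonnegative
vectors on `{0,…,K}²` summing to one, matching both propensity-score margins,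
and satisfying the restrictions `R`. -/
def ThetaI {Ω : Type*} [MeasurableSpace Ω] (P : MeasureTheory.Measure Ω) (K : ℕ)
    (Z D0 D1 : Ω → ℕ) (R : (ℕ × ℕ → ℝ) → Prop) : Set (ℕ × ℕ → ℝ) :=
  {p | (∀ t ∈ Finset.range (K + 1) ×ˢ Finset.range (K + 1), 0 ≤ p t) ∧
       (∑ t ∈ Finset.range (K + 1) ×ˢ Finset.range (K + 1), p t = 1) ∧
       (∀ d ≤ K, propScore P Z D0 D1 d 1 = ∑ d' ∈ Finset.range (K + 1), p (d', d)) ∧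
       (∀ d ≤ K, propScore P Z D0 D1 d 0 = ∑ d' ∈ Finset.range (K + 1), p (d, d')) ∧
       R p}

/-- `p̲^r_t`: the infimum of `p t` over the identified set `Θ_I(R)`. -/
noncomputable def pbar {Ω : Type*} [MeasurableSpace Ω] (P : MeasureTheory.Measure Ω)
    (K : ℕ) (Z D0 D1 : Ω → ℕ) (R : (ℕ × ℕ → ℝ) → Prop) (t : ℕ × ℕ) : ℝ :=
  sInf ((fun p => p t) '' ThetaI P K Z D0 D1 R)

/-- The conditional CDF `F_{Y|D=d,Z=z}` of the realized outcome. -/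
noncomputable def FYcond {Ω : Type*} [MeasurableSpace Ω] (P : MeasureTheory.Measure Ω)
    (K : ℕ) (Z D0 D1 : Ω → ℕ) (Y : ℕ → ℕ → Ω → ℝ) (d z : ℕ) : ℝ → ℝ :=
  cdfOf (P[|{ω | Dreal Z D0 D1 ω = d ∧ Z ω = z}]) (Yreal K Z D0 D1 Y)

section CDF
variable {Ω : Type*} [MeasurableSpace Ω] (μ : Measure Ω) [IsProbabilityMeasure μ]
  (W : Ω → ℝ)

lemma cdfOf_mono : Monotone (cdfOf μ W) := fun a b hab =>
  ENNReal.toReal_mono (measure_ne_top μ _) (measure_mono (fun ω h => le_trans h hab))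

lemma cdfOf_nonneg (w : ℝ) : 0 ≤ cdfOf μ W w := ENNReal.toReal_nonneg

lemma cdfOf_le_one (w : ℝ) : cdfOf μ W w ≤ 1 := by
  have := prob_le_one (μ := μ) (s := {ω | W ω ≤ w})
  simpa [cdfOf] using ENNReal.toReal_mono ENNReal.one_ne_top this

variable {W}
variable (hWm : Measurable W) {yL yU : ℝ} (hbdd : ∀ᵐ ω ∂μ, W ω ∈ Set.Icc yL yU)
include hWm

lemma cdfOf_right {u w : ℝ} (h : ∀ ε > 0, u ≤ cdfOf μ W (w + ε)) : u ≤ cdfOf μ W w := by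
  have hset : ⋂ n : ℕ, {ω | W ω ≤ w + 1 / (n + 1)} = {ω | W ω ≤ w} := by
    ext ω
    simp only [Set.mem_iInter, Set.mem_setOf_eq]
    constructor
    · intro hn
      have hlim : Filter.Tendsto (fun n : ℕ => w + 1 / (n + 1)) Filter.atTop (nhds w) := by
        simpa using Filter.Tendsto.const_add w tendsto_one_div_add_atTop_nhds_zero_nat
      exact ge_of_tendsto' hlim hn
    · intro hw n
      have : (0:ℝ) < 1 / (n + 1) := by positivity
      linarith
  have htend : Filter.Tendsto (fun n : ℕ => μ {ω | W ω ≤ w + 1 / (n + 1)})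
      Filter.atTop (nhds (μ {ω | W ω ≤ w})) := by
    rw [← hset]
    apply tendsto_measure_iInter_atTop
    · exact fun n => (hWm measurableSet_Iic).nullMeasurableSet
    · intro a b hab
      apply Set.setOf_subset_setOf.mpr
      intro ω hω
      have : (1:ℝ) / (b + 1) ≤ 1 / (a + 1) := by
        apply one_div_le_one_div_of_le (by positivity)
        exact_mod_cast by omega
      linarith
    · exact ⟨0, measure_ne_top μ _⟩
  have htoReal : Filter.Tendsto (fun n : ℕ => cdfOf μ W (w + 1 / (n + 1)))
      Filter.atTop (nhds (cdfOf μ W w)) :=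
    (ENNReal.tendsto_toReal (measure_ne_top μ _)).comp htend
  exact ge_of_tendsto' htoReal fun n => h _ (by positivity)
end CDF

section Galois
variable {Ω : Type*} [MeasurableSpace Ω] (μ : Measure Ω) [IsProbabilityMeasure μ]
  {W : Ω → ℝ} (hWm : Measurable W) {yL yU : ℝ} (hbdd : ∀ᵐ ω ∂μ, W ω ∈ Set.Icc yL yU)

include hWm hbdd

lemma cdfOf_eq_one {w : ℝ} (hw : yU ≤ w) : cdfOf μ W w = 1 := by
  have h1 : μ {ω | W ω ≤ w} = 1 := by
    have hsub : {ω | W ω ≤ w}ᶜ ⊆ {ω | ¬ W ω ∈ Set.Icc yL yU} :=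
      fun ω hω hmem => hω (le_trans hmem.2 hw)
    exact (prob_compl_eq_zero_iff (μ := μ) (s := {ω | W ω ≤ w})
      (hWm measurableSet_Iic)).mp (measure_mono_null hsub (by simpa [ae_iff] using hbdd))
  simp [cdfOf, h1]

lemma cdfOf_eq_zero {w : ℝ} (hw : w < yL) : cdfOf μ W w = 0 := by
  have h0 : μ {ω | W ω ≤ w} = 0 := by
    have : {ω | W ω ≤ w} ⊆ {ω | ¬ W ω ∈ Set.Icc yL yU} := by
      intro ω hω hmem
      exact absurd (le_trans hmem.1 hω) (not_le.mpr hw)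
    exact measure_mono_null this (by simpa [ae_iff] using hbdd)
  simp [cdfOf, h0]

lemma quantile_bddBelow {u : ℝ} (hu0 : 0 < u) : yL ∈ lowerBounds {w | u ≤ cdfOf μ W w} := by
  intro v hv
  by_contra hlt
  push_neg at hlt
  have := cdfOf_eq_zero μ hWm hbdd hlt
  rw [Set.mem_setOf_eq, this] at hv
  linarith

lemma quantile_set_nonempty {u : ℝ} (hu1 : u ≤ 1) : yU ∈ {w | u ≤ cdfOf μ W w} := by
  rw [Set.mem_setOf_eq, cdfOf_eq_one μ hWm hbdd le_rfl]; exact hu1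

lemma quantile_le_iff {u : ℝ} (hu0 : 0 < u) (hu1 : u ≤ 1) (w : ℝ) :
    quantileFn (cdfOf μ W) u ≤ w ↔ u ≤ cdfOf μ W w := by
  constructor
  · intro h
    apply cdfOf_right μ hWm
    intro ε hε
    have hlt : sInf {v | u ≤ cdfOf μ W v} < w + ε := lt_of_le_of_lt h (by linarith)
    rw [csInf_lt_iff ⟨yL, quantile_bddBelow μ hWm hbdd hu0⟩
      ⟨yU, quantile_set_nonempty μ hWm hbdd hu1⟩] at hlt
    obtain ⟨v, hv, hvw⟩ := hlt
    exact le_trans hv (cdfOf_mono μ W hvw.le)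
  · intro h
    exact csInf_le ⟨yL, quantile_bddBelow μ hWm hbdd hu0⟩ h

lemma quantile_mem_Icc {u : ℝ} (hu0 : 0 < u) (hu1 : u ≤ 1) :
    quantileFn (cdfOf μ W) u ∈ Set.Icc yL yU := by
  constructor
  · exact le_csInf ⟨yU, quantile_set_nonempty μ hWm hbdd hu1⟩
      (fun v hv => quantile_bddBelow μ hWm hbdd hu0 hv)
  · exact csInf_le ⟨yL, quantile_bddBelow μ hWm hbdd hu0⟩
      (quantile_set_nonempty μ hWm hbdd hu1)

end Galois

section Trim
open Set

lemma trim_bounds {Ω : Type*} [MeasurableSpace Ω] (μ : Measure Ω) [IsProbabilityMeasure μ]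
    {W : Ω → ℝ} (hWm : Measurable W) {yL yU : ℝ} (hLU : yL ≤ yU)
    (hbdd : ∀ᵐ ω ∂μ, W ω ∈ Set.Icc yL yU)
    {A : Set Ω} (hA : MeasurableSet A) {γ : ℝ} (hγ0 : 0 < γ)
    (hγq : γ ≤ (μ A).toReal) :
    γ⁻¹ * ∫ u in Set.Ioc (0:ℝ) γ, quantileFn (cdfOf μ W) u
        ≤ (μ A).toReal⁻¹ * ∫ ω in A, W ω ∂μ
    ∧ (μ A).toReal⁻¹ * ∫ ω in A, W ω ∂μ
        ≤ γ⁻¹ * ∫ u in Set.Ico (1-γ) (1:ℝ), quantileFn (cdfOf μ W) u := by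
  set q : ℝ := (μ A).toReal with hqdef
  have hq0 : 0 < q := lt_of_lt_of_le hγ0 hγq
  have hq1 : q ≤ 1 := by
    rw [hqdef]
    exact ENNReal.toReal_mono ENNReal.one_ne_top (prob_le_one)
  have hγ1 : γ ≤ 1 := le_trans hγq hq1
  set F : ℝ → ℝ := cdfOf μ W with hFdef
  have hF0 : ∀ w, 0 ≤ F w := cdfOf_nonneg μ W
  have hF1 : ∀ w, F w ≤ 1 := cdfOf_le_one μ W
  have hFmono : Monotone F := cdfOf_mono μ W
  set g : ℝ → ℝ := fun u => if 0 < u then quantileFn F (min u 1) else yL with hgdef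
  have hgbd : ∀ u, g u ∈ Set.Icc yL yU := by
    intro u
    simp only [hgdef]
    by_cases hu : 0 < u
    · rw [if_pos hu]
      exact quantile_mem_Icc μ hWm hbdd (lt_min hu one_pos) (min_le_right _ _)
    · rw [if_neg hu]; exact ⟨le_rfl, hLU⟩
  have hgmono : Monotone g := by
    intro a b hab
    simp only [hgdef]
    by_cases ha : 0 < a
    · have hb : 0 < b := lt_of_lt_of_le ha hab
      rw [if_pos ha, if_pos hb]
      apply csInf_le_csInf
      · exact ⟨yL, quantile_bddBelow μ hWm hbdd (lt_min ha one_pos)⟩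
      · exact ⟨yU, quantile_set_nonempty μ hWm hbdd (min_le_right _ _)⟩
      · intro w hw
        exact le_trans (min_le_min hab le_rfl) hw
    · rw [if_neg ha]
      by_cases hb : 0 < b
      · rw [if_pos hb]
        exact (quantile_mem_Icc μ hWm hbdd (lt_min hb one_pos) (min_le_right _ _)).1
      · rw [if_neg hb]
  have hgm : Measurable g := hgmono.measurable
  have hgQ1 : Set.EqOn (quantileFn F) g (Set.Ioc 0 γ) := by
    intro u hu
    simp only [hgdef]
    rw [if_pos hu.1, min_eq_left (le_trans hu.2 hγ1)]
  have key : ∀ u, 0 < u → u ≤ 1 → ∀ s, (s < g u ↔ F s < u) := by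
    intro u hu0 hu1 s
    have hgu : g u = quantileFn F u := by
      simp only [hgdef]; rw [if_pos hu0, min_eq_left hu1]
    rw [hgu, ← not_le, ← not_le, not_iff_not]
    exact quantile_le_iff μ hWm hbdd hu0 hu1 s
  -- integrability helpers
  have hIg1 : IntegrableOn (fun u => g u - yL) (Set.Ioc (0:ℝ) γ) volume := by
    apply Integrable.mono' (integrable_const (yU - yL))
      ((hgm.sub measurable_const).aestronglyMeasurable)
    filter_upwards with u
    rw [Real.norm_eq_abs, abs_le]
    constructor
    · simp only [Pi.sub_apply]; linarith [(hgbd u).1]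
    · simp only [Pi.sub_apply]; linarith [(hgbd u).2]
  have hIg2 : IntegrableOn (fun u => g u - yL) (Set.Ico (1-γ) (1:ℝ)) volume := by
    apply Integrable.mono' (integrable_const (yU - yL))
      ((hgm.sub measurable_const).aestronglyMeasurable)
    filter_upwards with u
    rw [Real.norm_eq_abs, abs_le]
    constructor
    · simp only [Pi.sub_apply]; linarith [(hgbd u).1]
    · simp only [Pi.sub_apply]; linarith [(hgbd u).2]
  have hWint : Integrable W μ := by
    apply Integrable.mono' (integrable_const (max ‖yL‖ ‖yU‖)) hWm.aestronglyMeasurable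
    filter_upwards [hbdd] with ω hω
    rw [Real.norm_eq_abs]
    exact abs_le_max_abs_abs hω.1 hω.2
  -- Layer cake 1
  have LC1 : ∫ u in Set.Ioc (0:ℝ) γ, (g u - yL)
      = ∫ t in Set.Ioi (0:ℝ), max (γ - F (yL + t)) 0 := by
    rw [Integrable.integral_eq_integral_meas_lt hIg1
      (Filter.Eventually.of_forall (fun u => sub_nonneg.mpr (hgbd u).1))]
    apply setIntegral_congr_fun measurableSet_Ioi
    intro t ht
    beta_reduce
    have hmeas : MeasurableSet {a : ℝ | t < g a - yL} :=
      measurableSet_lt measurable_const (hgm.sub measurable_const)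
    rw [measureReal_def, Measure.restrict_apply hmeas]
    have hset : {a : ℝ | t < g a - yL} ∩ Set.Ioc 0 γ = Set.Ioc (F (yL + t)) γ := by
      ext u
      simp only [Set.mem_inter_iff, Set.mem_setOf_eq, Set.mem_Ioc]
      constructor
      · rintro ⟨h1, h2, h3⟩
        exact ⟨(key u h2 (le_trans h3 hγ1) (yL + t)).mp (by linarith), h3⟩
      · rintro ⟨h1, h2⟩
        have hu0 : 0 < u := lt_of_le_of_lt (hF0 _) h1
        have := (key u hu0 (le_trans h2 hγ1) (yL + t)).mpr h1
        exact ⟨by linarith, hu0, h2⟩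
    rw [hset, Real.volume_Ioc, ENNReal.toReal_ofReal']
  -- Layer cake 2
  have LC2 : ∫ u in Set.Ico (1-γ) (1:ℝ), (g u - yL)
      = ∫ t in Set.Ioi (0:ℝ), max (1 - max (1-γ) (F (yL + t))) 0 := by
    rw [Integrable.integral_eq_integral_meas_lt hIg2
      (Filter.Eventually.of_forall (fun u => sub_nonneg.mpr (hgbd u).1))]
    apply setIntegral_congr_fun measurableSet_Ioi
    intro t ht
    beta_reduce
    have ht0 : (0:ℝ) < t := ht
    have hmeas : MeasurableSet {a : ℝ | t < g a - yL} :=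
      measurableSet_lt measurable_const (hgm.sub measurable_const)
    rw [measureReal_def, Measure.restrict_apply hmeas]
    have hiff : ∀ u ∈ Set.Ico (1-γ) (1:ℝ), (t < g u - yL ↔ F (yL + t) < u) := by
      intro u hu
      by_cases hu0 : 0 < u
      · have hk := key u hu0 hu.2.le (yL + t)
        constructor
        · intro h; exact hk.mp (by linarith)
        · intro h; linarith [hk.mpr h]
      · have hu0' : u = 0 := le_antisymm (not_lt.mp hu0) (le_trans (by linarith) hu.1)
        constructor
        · intro h
          exfalso
          have hgu : g u = yL := by simp only [hgdef]; rw [if_neg hu0]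
          rw [hgu] at h; linarith
        · intro h
          exact absurd (lt_of_le_of_lt (hF0 _) h)
            (by rw [hu0']; exact lt_irrefl 0)
    have hset : {a : ℝ | t < g a - yL} ∩ Set.Ico (1-γ) 1
        = Set.Ioi (F (yL+t)) ∩ Set.Ico (1-γ) 1 := by
      ext u
      simp only [Set.mem_inter_iff, Set.mem_setOf_eq, Set.mem_Ioi]
      constructor
      · rintro ⟨h1, h2⟩; exact ⟨(hiff u h2).mp h1, h2⟩
      · rintro ⟨h1, h2⟩; exact ⟨(hiff u h2).mpr h1, h2⟩
    rw [hset]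
    rcases lt_or_ge (F (yL + t)) (1-γ) with hc | hc
    · have hfull : Set.Ioi (F (yL+t)) ∩ Set.Ico (1-γ) 1 = Set.Ico (1-γ) 1 :=
        Set.inter_eq_self_of_subset_right (fun u hu => lt_of_lt_of_le hc hu.1)
      rw [hfull, Real.volume_Ico, ENNReal.toReal_ofReal', max_eq_left hc.le]
    · have hIoo : Set.Ioi (F (yL+t)) ∩ Set.Ico (1-γ) 1 = Set.Ioo (F (yL+t)) 1 := by
        ext u
        simp only [Set.mem_inter_iff, Set.mem_Ioi, Set.mem_Ico, Set.mem_Ioo]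
        constructor
        · rintro ⟨h1, h2, h3⟩; exact ⟨h1, h3⟩
        · rintro ⟨h1, h2⟩; exact ⟨h1, le_trans hc h1.le, h2⟩
      rw [hIoo, Real.volume_Ioo, ENNReal.toReal_ofReal', max_eq_right hc]
  -- Layer cake 3
  set m : ℝ → ℝ := fun t => (μ (A ∩ {ω | yL + t < W ω})).toReal with hmdef
  have LC3 : ∫ ω in A, (W ω - yL) ∂μ = ∫ t in Set.Ioi (0:ℝ), m t := by
    have hIf : Integrable (A.indicator (fun ω => W ω - yL)) μ :=
      (hWint.sub (integrable_const yL)).indicator hA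
    have hnn : 0 ≤ᵐ[μ] A.indicator (fun ω => W ω - yL) := by
      filter_upwards [hbdd] with ω hω
      by_cases hωA : ω ∈ A
      · simp only [Pi.zero_apply, Set.indicator_of_mem hωA]; linarith [hω.1]
      · simp [Set.indicator_of_notMem hωA]
    rw [← integral_indicator hA, Integrable.integral_eq_integral_meas_lt hIf hnn]
    apply setIntegral_congr_fun measurableSet_Ioi
    intro t ht
    beta_reduce
    have ht0 : (0:ℝ) < t := ht
    have hst : {a | t < A.indicator (fun ω => W ω - yL) a}
        = A ∩ {ω | yL + t < W ω} := by
      ext ω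
      by_cases hω : ω ∈ A
      · simp only [Set.mem_setOf_eq, Set.indicator_of_mem hω, Set.mem_inter_iff, hω,
          true_and]
        constructor <;> intro h <;> linarith
      · simp only [Set.mem_setOf_eq, Set.indicator_of_notMem hω, Set.mem_inter_iff, hω,
          false_and, iff_false, not_lt]
        linarith
    rw [hst]; rfl
  -- basic facts about m
  have hm0 : ∀ t, 0 ≤ m t := fun t => ENNReal.toReal_nonneg
  have hm_anti : Antitone m := by
    intro a b hab
    apply ENNReal.toReal_mono (measure_ne_top μ _)
    apply measure_mono
    intro ω hω
    obtain ⟨h1, h2⟩ := hω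
    refine ⟨h1, ?_⟩
    simp only [Set.mem_setOf_eq] at h2 ⊢
    linarith
  have hm_vanish : ∀ t, yU - yL < t → m t = 0 := by
    intro t ht
    have hnull : μ (A ∩ {ω | yL + t < W ω}) = 0 := by
      have hsub : A ∩ {ω | yL + t < W ω} ⊆ {ω | ¬ W ω ∈ Set.Icc yL yU} := by
        intro ω hω hmem
        have h1 := hω.2
        simp only [Set.mem_setOf_eq] at h1
        exact absurd hmem.2 (not_le.mpr (by linarith))
      exact measure_mono_null hsub (by simpa [ae_iff] using hbdd)
    simp only [hmdef, hnull, ENNReal.toReal_zero]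
  have hm_le_one : ∀ t, m t ≤ 1 := by
    intro t
    apply ENNReal.toReal_mono ENNReal.one_ne_top
    exact prob_le_one
  have hm_le_q : ∀ t, m t ≤ q := by
    intro t
    exact ENNReal.toReal_mono (measure_ne_top μ _) (measure_mono Set.inter_subset_left)
  -- integrability of the right-hand integrands
  have hq_inv_nn : (0:ℝ) ≤ q⁻¹ := inv_nonneg.mpr hq0.le
  have hγ_inv_nn : (0:ℝ) ≤ γ⁻¹ := inv_nonneg.mpr hγ0.le
  have hBind1 : Integrable ((Set.Ioc (0:ℝ) (yU - yL)).indicator (fun _ => q⁻¹))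
      (volume.restrict (Set.Ioi (0:ℝ))) := by
    have hc : IntegrableOn (fun _ : ℝ => q⁻¹) (Set.Ioc (0:ℝ) (yU - yL)) volume :=
      integrableOn_const measure_Ioc_lt_top.ne
    exact ((integrable_indicator_iff measurableSet_Ioc).mpr hc).restrict
  have hBind2 : Integrable ((Set.Ioc (0:ℝ) (yU - yL)).indicator (fun _ => γ⁻¹))
      (volume.restrict (Set.Ioi (0:ℝ))) := by
    have hc : IntegrableOn (fun _ : ℝ => γ⁻¹) (Set.Ioc (0:ℝ) (yU - yL)) volume :=
      integrableOn_const measure_Ioc_lt_top.ne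
    exact ((integrable_indicator_iff measurableSet_Ioc).mpr hc).restrict
  have hIm : Integrable (fun t => q⁻¹ * m t) (volume.restrict (Set.Ioi (0:ℝ))) := by
    apply Integrable.mono' hBind1
      (((hm_anti.measurable).const_mul q⁻¹).aestronglyMeasurable)
    rw [ae_restrict_iff' measurableSet_Ioi]
    filter_upwards with t ht
    rcases le_or_gt t (yU - yL) with h | h
    · rw [Set.indicator_of_mem (Set.mem_Ioc.mpr ⟨Set.mem_Ioi.mp ht, h⟩)]
      rw [Real.norm_eq_abs, abs_of_nonneg (mul_nonneg hq_inv_nn (hm0 t))]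
      calc q⁻¹ * m t ≤ q⁻¹ * 1 :=
            mul_le_mul_of_nonneg_left (hm_le_one t) hq_inv_nn
        _ = q⁻¹ := mul_one _
    · rw [Set.indicator_of_notMem (fun hmem => absurd (Set.mem_Ioc.mp hmem).2 (not_le.mpr h)),
        hm_vanish t h]
      simp
  have hI2 : Integrable (fun t => γ⁻¹ * max (1 - max (1-γ) (F (yL + t))) 0)
      (volume.restrict (Set.Ioi (0:ℝ))) := by
    have hanti : Antitone (fun t => γ⁻¹ * max (1 - max (1-γ) (F (yL + t))) 0) := by
      intro a b hab
      apply mul_le_mul_of_nonneg_left _ hγ_inv_nn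
      apply max_le_max _ le_rfl
      have := hFmono (show yL + a ≤ yL + b by linarith)
      apply sub_le_sub_left
      exact max_le_max le_rfl this
    apply Integrable.mono' hBind2 (hanti.measurable.aestronglyMeasurable)
    rw [ae_restrict_iff' measurableSet_Ioi]
    filter_upwards with t ht
    rcases le_or_gt t (yU - yL) with h | h
    · rw [Set.indicator_of_mem (Set.mem_Ioc.mpr ⟨Set.mem_Ioi.mp ht, h⟩)]
      rw [Real.norm_eq_abs, abs_of_nonneg (mul_nonneg hγ_inv_nn (le_max_right _ _))]
      have hx : max (1 - max (1-γ) (F (yL + t))) 0 ≤ 1 := by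
        apply max_le _ zero_le_one
        have h1 := hF0 (yL + t)
        have h2 := le_max_right (1-γ) (F (yL + t))
        linarith
      calc γ⁻¹ * max (1 - max (1-γ) (F (yL + t))) 0 ≤ γ⁻¹ * 1 :=
            mul_le_mul_of_nonneg_left hx hγ_inv_nn
        _ = γ⁻¹ := mul_one _
    · rw [Set.indicator_of_notMem (fun hmem => absurd (Set.mem_Ioc.mp hmem).2 (not_le.mpr h))]
      have hF1' : F (yL + t) = 1 := cdfOf_eq_one μ hWm hbdd (by linarith)
      rw [hF1']
      have hmx : max (1-γ) (1:ℝ) = 1 := max_eq_right (by linarith)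
      rw [hmx]
      simp
  -- pointwise comparisons
  have comp1 : ∫ t in Set.Ioi (0:ℝ), γ⁻¹ * max (γ - F (yL + t)) 0
      ≤ ∫ t in Set.Ioi (0:ℝ), q⁻¹ * m t := by
    apply integral_mono_of_nonneg
    · filter_upwards with t
      exact mul_nonneg hγ_inv_nn (le_max_right _ _)
    · exact hIm
    · filter_upwards with t
      have hmeasT : MeasurableSet {ω | yL + t < W ω} := measurableSet_lt measurable_const hWm
      have hsplit' : μ (A ∩ {ω | yL + t < W ω}) + μ (A \ {ω | yL + t < W ω}) = μ A :=
        measure_inter_add_diff A hmeasT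
      set r : ℝ := (μ (A \ {ω | yL + t < W ω})).toReal with hrdef
      have hsplit : m t + r = q := by
        rw [hmdef, hrdef, hqdef, ← ENNReal.toReal_add (measure_ne_top μ _) (measure_ne_top μ _),
          hsplit']
      have hr0 : 0 ≤ r := ENNReal.toReal_nonneg
      have hr_le : r ≤ F (yL + t) := by
        apply ENNReal.toReal_mono (measure_ne_top μ _)
        apply measure_mono
        intro ω hω
        simp only [Set.mem_setOf_eq]
        exact not_lt.mp (fun hc => hω.2 hc)
      rcases le_or_gt γ (F (yL + t)) with hc | hc
      · rw [max_eq_right (by linarith)]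
        simp only [mul_zero]
        exact mul_nonneg hq_inv_nn (hm0 t)
      · rw [max_eq_left (by linarith)]
        rw [inv_mul_eq_div, inv_mul_eq_div, div_le_div_iff₀ hγ0 hq0]
        nlinarith [mul_le_mul_of_nonneg_right hr_le hγ0.le,
          mul_le_mul_of_nonneg_left hγq (hF0 (yL + t))]
  have comp2 : ∫ t in Set.Ioi (0:ℝ), q⁻¹ * m t
      ≤ ∫ t in Set.Ioi (0:ℝ), γ⁻¹ * max (1 - max (1-γ) (F (yL + t))) 0 := by
    apply integral_mono_of_nonneg
    · filter_upwards with t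
      exact mul_nonneg hq_inv_nn (hm0 t)
    · exact hI2
    · filter_upwards with t
      rcases le_or_gt (F (yL + t)) (1-γ) with hc | hc
      · rw [max_eq_left hc]
        have h11 : (1:ℝ) - (1-γ) = γ := by ring
        rw [h11, max_eq_left hγ0.le, inv_mul_cancel₀ (ne_of_gt hγ0)]
        rw [inv_mul_eq_div, div_le_one hq0]
        exact hm_le_q t
      · rw [max_eq_right hc.le]
        have hcompl : m t ≤ 1 - F (yL + t) := by
          have hTc : {ω | yL + t < W ω} = {ω | W ω ≤ yL + t}ᶜ := by
            ext ω; simp [not_le]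
          have h1 : μ {ω | yL + t < W ω} = 1 - μ {ω | W ω ≤ yL + t} := by
            rw [hTc, measure_compl (show MeasurableSet {ω | W ω ≤ yL + t} from
              hWm measurableSet_Iic) (measure_ne_top μ _), measure_univ]
          have h2 : m t ≤ (μ {ω | yL + t < W ω}).toReal :=
            ENNReal.toReal_mono (measure_ne_top μ _) (measure_mono Set.inter_subset_right)
          rw [h1, ENNReal.toReal_sub_of_le prob_le_one ENNReal.one_ne_top] at h2
          simpa [hFdef, cdfOf] using h2
        have h1F : 0 ≤ 1 - F (yL + t) := le_trans (hm0 t) hcompl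
        rw [max_eq_left h1F]
        calc q⁻¹ * m t ≤ γ⁻¹ * m t :=
              mul_le_mul_of_nonneg_right
                (by apply inv_anti₀ hγ0 hγq) (hm0 t)
          _ ≤ γ⁻¹ * (1 - F (yL + t)) :=
              mul_le_mul_of_nonneg_left hcompl hγ_inv_nn
  -- constants
  have hIgOn1 : IntegrableOn g (Set.Ioc (0:ℝ) γ) volume := by
    apply Integrable.mono' (integrable_const (max ‖yL‖ ‖yU‖)) hgm.aestronglyMeasurable
    filter_upwards with u
    rw [Real.norm_eq_abs]
    exact abs_le_max_abs_abs (hgbd u).1 (hgbd u).2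
  have hIgOn2 : IntegrableOn g (Set.Ico (1-γ) (1:ℝ)) volume := by
    apply Integrable.mono' (integrable_const (max ‖yL‖ ‖yU‖)) hgm.aestronglyMeasurable
    filter_upwards with u
    rw [Real.norm_eq_abs]
    exact abs_le_max_abs_abs (hgbd u).1 (hgbd u).2
  have hconst1 : ∫ u in Set.Ioc (0:ℝ) γ, (g u - yL)
      = (∫ u in Set.Ioc (0:ℝ) γ, g u) - γ * yL := by
    rw [integral_sub hIgOn1.integrable (integrableOn_const measure_Ioc_lt_top.ne)]
    congr 1
    rw [setIntegral_const, measureReal_def, Real.volume_Ioc, smul_eq_mul,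
      ENNReal.toReal_ofReal (by linarith)]
    ring
  have hconst2 : ∫ u in Set.Ico (1-γ) (1:ℝ), (g u - yL)
      = (∫ u in Set.Ico (1-γ) (1:ℝ), g u) - γ * yL := by
    rw [integral_sub hIgOn2.integrable (integrableOn_const measure_Ico_lt_top.ne)]
    congr 1
    rw [setIntegral_const, measureReal_def, Real.volume_Ico, smul_eq_mul,
      ENNReal.toReal_ofReal (by linarith)]
    ring
  have hconst3 : ∫ ω in A, (W ω - yL) ∂μ = (∫ ω in A, W ω ∂μ) - q * yL := by
    rw [integral_sub hWint.integrableOn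
      (integrableOn_const (measure_lt_top μ A).ne)]
    congr 1
    rw [setIntegral_const, measureReal_def, smul_eq_mul, hqdef]
  have hQg2 : ∫ u in Set.Ico (1-γ) (1:ℝ), quantileFn F u
      = ∫ u in Set.Ico (1-γ) (1:ℝ), g u := by
    apply setIntegral_congr_ae measurableSet_Ico
    have h0 : ∀ᵐ u : ℝ, u ≠ 0 := by
      rw [ae_iff]
      have : {u : ℝ | ¬u ≠ 0} = {0} := by ext u; simp
      rw [this, Real.volume_singleton]
    filter_upwards [h0] with u hu hmem
    have hu0 : 0 < u := lt_of_le_of_ne (le_trans (by linarith) hmem.1) (Ne.symm hu)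
    simp only [hgdef]
    rw [if_pos hu0, min_eq_left hmem.2.le]
  have hQg1' : ∫ u in Set.Ioc (0:ℝ) γ, quantileFn F u = ∫ u in Set.Ioc (0:ℝ) γ, g u :=
    setIntegral_congr_fun measurableSet_Ioc hgQ1
  rw [integral_const_mul, integral_const_mul] at comp1
  rw [integral_const_mul, integral_const_mul] at comp2
  constructor
  · have e1 : γ⁻¹ * ∫ u in Set.Ioc (0:ℝ) γ, quantileFn F u
        = γ⁻¹ * (∫ u in Set.Ioc (0:ℝ) γ, (g u - yL)) + yL := by
      rw [hQg1', hconst1, mul_sub, ← mul_assoc, inv_mul_cancel₀ (ne_of_gt hγ0), one_mul]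
      ring
    have e3 : q⁻¹ * ∫ ω in A, W ω ∂μ
        = q⁻¹ * (∫ ω in A, (W ω - yL) ∂μ) + yL := by
      rw [hconst3, mul_sub, ← mul_assoc, inv_mul_cancel₀ (ne_of_gt hq0), one_mul]
      ring
    rw [e1, e3, LC1, LC3]
    linarith [comp1]
  · have e2 : γ⁻¹ * ∫ u in Set.Ico (1-γ) (1:ℝ), quantileFn F u
        = γ⁻¹ * (∫ u in Set.Ico (1-γ) (1:ℝ), (g u - yL)) + yL := by
      rw [hQg2, hconst2, mul_sub, ← mul_assoc, inv_mul_cancel₀ (ne_of_gt hγ0), one_mul]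
      ring
    have e3 : q⁻¹ * ∫ ω in A, W ω ∂μ
        = q⁻¹ * (∫ ω in A, (W ω - yL) ∂μ) + yL := by
      rw [hconst3, mul_sub, ← mul_assoc, inv_mul_cancel₀ (ne_of_gt hq0), one_mul]
      ring
    rw [e2, e3, LC2, LC3]
    linarith [comp2]

end Trim

section Indep
variable {Ω : Type*} [MeasurableSpace Ω] {P : Measure Ω} [IsProbabilityMeasure P]
  {K : ℕ} {Y : ℕ → ℕ → Ω → ℝ} {D0 D1 Z : Ω → ℕ}

/-- On the event `Z = z` (`z ≤ 1`), `Dreal = d` and the realized outcome is `Y z d`. -/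
lemma Yreal_eq {z d : ℕ} (hz : z ≤ 1) (hd1 : 1 ≤ d) (hdK : d ≤ K) (ω : Ω)
    (hZ : Z ω = z) (hD : Dreal Z D0 D1 ω = d) :
    Yreal K Z D0 D1 Y ω = Y z d ω := by
  unfold Yreal
  rw [Finset.sum_eq_single_of_mem d (Finset.mem_Icc.mpr ⟨hd1, hdK⟩)]
  · rw [if_pos hD, mul_one, hZ]
    interval_cases z
    · norm_num
    · norm_num
  · intro j _ hj
    rw [if_neg (by rw [hD]; exact fun h => hj h.symm), mul_zero]

lemma yreal_measurable (hZm : Measurable Z) (hD0m : Measurable D0) (hD1m : Measurable D1)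
    (hYm : ∀ z ≤ 1, ∀ d, 1 ≤ d → d ≤ K → Measurable (Y z d)) :
    Measurable (Yreal K Z D0 D1 Y) := by
  unfold Yreal
  apply Finset.measurable_sum
  intro d hd
  rw [Finset.mem_Icc] at hd
  have hDm : Measurable (Dreal Z D0 D1) :=
    ((hD1m.mul hZm).add (hD0m.mul (measurable_const.sub hZm)))
  have hZr : Measurable (fun ω => (Z ω : ℝ)) := measurable_from_nat.comp hZm
  apply Measurable.mul
  · exact ((hYm 1 le_rfl d hd.1 hd.2).mul hZr).add
      ((hYm 0 (by norm_num) d hd.1 hd.2).mul (measurable_const.sub hZr))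
  · exact Measurable.ite (hDm (measurableSet_singleton d)) measurable_const measurable_const

/-- Independence consequences of RCT. -/
lemma rct_facts (hZm : Measurable Z) (hD0m : Measurable D0) (hD1m : Measurable D1)
    (hYm : ∀ z ≤ 1, ∀ d, 1 ≤ d → d ≤ K → Measurable (Y z d))
    (hRCT : RCT P K Y D0 D1 Z)
    (hYint : ∀ z ≤ 1, ∀ d, 1 ≤ d → d ≤ K → Integrable (Y z d) P)
    {z d : ℕ} (hz : z ≤ 1) (hd1 : 1 ≤ d) (hdK : d ≤ K) (a b : ℕ) :
    (P ({ω | D0 ω = a ∧ D1 ω = b} ∩ {ω | Z ω = z})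
        = P {ω | D0 ω = a ∧ D1 ω = b} * P {ω | Z ω = z})
    ∧ (∫ ω in {ω | D0 ω = a ∧ D1 ω = b} ∩ {ω | Z ω = z}, Y z d ω ∂P
        = (P {ω | Z ω = z}).toReal * ∫ ω in {ω | D0 ω = a ∧ D1 ω = b}, Y z d ω ∂P) := by
  classical
  set Tev : Set Ω := {ω | D0 ω = a ∧ D1 ω = b} with hTevdef
  set Zev : Set Ω := {ω | Z ω = z} with hZevdef
  unfold RCT at hRCT
  rw [Indep_iff] at hRCT
  have hzmem : z ∈ ({0, 1} : Set ℕ) := by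
    interval_cases z
    · exact Set.mem_insert _ _
    · exact Set.mem_insert_of_mem _ rfl
  have hYle : MeasurableSpace.comap (Y z d) inferInstance ≤
      ((⨆ z' ∈ ({0, 1} : Set ℕ), ⨆ d' ∈ Set.Icc 1 K,
          MeasurableSpace.comap (Y z' d') inferInstance)
        ⊔ MeasurableSpace.comap D0 inferInstance ⊔ MeasurableSpace.comap D1 inferInstance) := by
    refine le_trans ?_ (le_sup_left.trans le_sup_left)
    refine le_trans ?_ (le_biSup
      (fun z' => ⨆ d' ∈ Set.Icc 1 K, MeasurableSpace.comap (Y z' d') inferInstance) hzmem)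
    exact le_biSup (fun d' => MeasurableSpace.comap (Y z d') inferInstance)
      (Set.mem_Icc.mpr ⟨hd1, hdK⟩)
  have hD0le : MeasurableSpace.comap D0 inferInstance ≤
      ((⨆ z' ∈ ({0, 1} : Set ℕ), ⨆ d' ∈ Set.Icc 1 K,
          MeasurableSpace.comap (Y z' d') inferInstance)
        ⊔ MeasurableSpace.comap D0 inferInstance ⊔ MeasurableSpace.comap D1 inferInstance) :=
    le_sup_left.trans' le_sup_right
  have hD1le : MeasurableSpace.comap D1 inferInstance ≤
      ((⨆ z' ∈ ({0, 1} : Set ℕ), ⨆ d' ∈ Set.Icc 1 K,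
          MeasurableSpace.comap (Y z' d') inferInstance)
        ⊔ MeasurableSpace.comap D0 inferInstance ⊔ MeasurableSpace.comap D1 inferInstance) :=
    le_sup_right
  have hTmeasG : MeasurableSet[((⨆ z' ∈ ({0, 1} : Set ℕ), ⨆ d' ∈ Set.Icc 1 K,
          MeasurableSpace.comap (Y z' d') inferInstance)
        ⊔ MeasurableSpace.comap D0 inferInstance ⊔ MeasurableSpace.comap D1 inferInstance)]
      Tev := by
    have h0 := hD0le _ ⟨{a}, measurableSet_singleton a, rfl⟩
    have h1 := hD1le _ ⟨{b}, measurableSet_singleton b, rfl⟩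
    exact h0.inter h1
  have hZevc : MeasurableSet[MeasurableSpace.comap Z inferInstance] Zev :=
    ⟨{z}, measurableSet_singleton z, rfl⟩
  have part1 : P (Tev ∩ Zev) = P Tev * P Zev := hRCT Tev Zev hTmeasG hZevc
  -- ambient measurability
  have hTmeas : MeasurableSet Tev :=
    (hD0m (measurableSet_singleton a)).inter (hD1m (measurableSet_singleton b))
  have hZevm : MeasurableSet Zev := hZm (measurableSet_singleton z)
  set f : Ω → ℝ := fun ω => Y z d ω * Tev.indicator (fun _ => (1:ℝ)) ω with hfdef
  set g : Ω → ℝ := Zev.indicator (fun _ => (1:ℝ)) with hgdef2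
  have hfG : Measurable[((⨆ z' ∈ ({0, 1} : Set ℕ), ⨆ d' ∈ Set.Icc 1 K,
          MeasurableSpace.comap (Y z' d') inferInstance)
        ⊔ MeasurableSpace.comap D0 inferInstance ⊔ MeasurableSpace.comap D1 inferInstance)]
      f :=
    (Measurable.of_comap_le hYle).mul (Measurable.indicator measurable_const hTmeasG)
  have hgZ : Measurable[MeasurableSpace.comap Z inferInstance] g :=
    Measurable.indicator measurable_const hZevc
  have hIndepF : IndepFun f g P := by
    rw [IndepFun_iff f g P]
    intro t1 t2 h1 h2
    exact hRCT t1 t2 (hfG.comap_le _ h1) (hgZ.comap_le _ h2)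
  have hfm : Measurable f :=
    (hYm z hz d hd1 hdK).mul (measurable_const.indicator hTmeas)
  have hgm : Measurable g := measurable_const.indicator hZevm
  have hIntf : Integrable f P := by
    apply Integrable.mono' (hYint z hz d hd1 hdK).norm hfm.aestronglyMeasurable
    filter_upwards with ω
    simp only [hfdef, norm_mul]
    apply mul_le_of_le_one_right (norm_nonneg _)
    by_cases hω : ω ∈ Tev
    · simp [Set.indicator_of_mem hω]
    · simp [Set.indicator_of_notMem hω]
  have hIntg : Integrable g P := by
    apply Integrable.mono' (integrable_const (1:ℝ)) hgm.aestronglyMeasurable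
    filter_upwards with ω
    simp only [hgdef2]
    by_cases hω : ω ∈ Zev
    · simp [Set.indicator_of_mem hω]
    · simp [Set.indicator_of_notMem hω]
  have hmul := hIndepF.integral_mul_eq_mul_integral hIntf.aestronglyMeasurable hIntg.aestronglyMeasurable
  have hfg_eq : f * g = (Tev ∩ Zev).indicator (Y z d) := by
    funext ω
    simp only [Pi.mul_apply, hfdef, hgdef2]
    by_cases h1 : ω ∈ Tev <;> by_cases h2 : ω ∈ Zev
    · rw [Set.indicator_of_mem h1, Set.indicator_of_mem h2,
        Set.indicator_of_mem (Set.mem_inter h1 h2)]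
      ring
    · rw [Set.indicator_of_notMem h2,
        Set.indicator_of_notMem (fun hc : ω ∈ Tev ∩ Zev => h2 hc.2)]
      ring
    · rw [Set.indicator_of_notMem h1,
        Set.indicator_of_notMem (fun hc : ω ∈ Tev ∩ Zev => h1 hc.1)]
      ring
    · rw [Set.indicator_of_notMem h1,
        Set.indicator_of_notMem (fun hc : ω ∈ Tev ∩ Zev => h1 hc.1)]
      ring
  have hf_eq : f = Tev.indicator (Y z d) := by
    funext ω
    simp only [hfdef]
    by_cases h1 : ω ∈ Tev
    · rw [Set.indicator_of_mem h1, Set.indicator_of_mem h1]; ring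
    · rw [Set.indicator_of_notMem h1, Set.indicator_of_notMem h1]; ring
  have hg_int : ∫ ω, g ω ∂P = (P Zev).toReal := by
    rw [hgdef2, integral_indicator_const (1:ℝ) hZevm, smul_eq_mul, mul_one, measureReal_def]
  rw [hfg_eq] at hmul
  rw [integral_indicator (hTmeas.inter hZevm)] at hmul
  rw [hf_eq] at hmul
  rw [integral_indicator hTmeas, hg_int] at hmul
  exact ⟨part1, by rw [hmul]; ring⟩

end Indep


section Side

lemma side_bound {Ω : Type*} [MeasurableSpace Ω] (P : Measure Ω) [IsProbabilityMeasure P]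
    (K : ℕ) (Z D0 D1 : Ω → ℕ)
    (hZm : Measurable Z) (hD0m : Measurable D0) (hD1m : Measurable D1)
    (Y : ℕ → ℕ → Ω → ℝ)
    (hYm : ∀ z ≤ 1, ∀ d, 1 ≤ d → d ≤ K → Measurable (Y z d))
    (hYint : ∀ z ≤ 1, ∀ d, 1 ≤ d → d ≤ K → Integrable (Y z d) P)
    (hRCT : RCT P K Y D0 D1 Z)
    {yL yU : ℝ} (hyLU : yL ≤ yU)
    (hBdd : ∀ z ≤ 1, ∀ d, 1 ≤ d → d ≤ K → ∀ᵐ ω ∂P, Y z d ω ∈ Set.Icc yL yU)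
    {z d a b : ℕ} (hz : z ≤ 1) (hd1 : 1 ≤ d) (hdK : d ≤ K)
    (hT : ∀ ω, D0 ω = a → D1 ω = b → Z ω = z → Dreal Z D0 D1 ω = d)
    (hTpos : 0 < P {ω | D0 ω = a ∧ D1 ω = b})
    (hps : 0 < propScore P Z D0 D1 d z)
    {γ : ℝ} (hγ0 : 0 < γ)
    (hγ : γ * propScore P Z D0 D1 d z ≤ (P {ω | D0 ω = a ∧ D1 ω = b}).toReal) :
    lowerTrunc (FYcond P K Z D0 D1 Y d z) γ
        ≤ ∫ ω, Y z d ω ∂(P[|{ω | D0 ω = a ∧ D1 ω = b}])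
    ∧ ∫ ω, Y z d ω ∂(P[|{ω | D0 ω = a ∧ D1 ω = b}])
        ≤ upperTrunc (FYcond P K Z D0 D1 Y d z) γ := by
  set Tev : Set Ω := {ω | D0 ω = a ∧ D1 ω = b} with hTevdef
  set Zev : Set Ω := {ω | Z ω = z} with hZevdef
  set B : Set Ω := {ω | Dreal Z D0 D1 ω = d ∧ Z ω = z} with hBdef
  have hDrm : Measurable (Dreal Z D0 D1) :=
    (hD1m.mul hZm).add (hD0m.mul (measurable_const.sub hZm))
  have hBmeas : MeasurableSet B :=
    (hDrm (measurableSet_singleton d)).inter (hZm (measurableSet_singleton z))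
  have hZevmeas : MeasurableSet Zev := hZm (measurableSet_singleton z)
  have hTevmeas : MeasurableSet Tev :=
    (hD0m (measurableSet_singleton a)).inter (hD1m (measurableSet_singleton b))
  have hps_eq : propScore P Z D0 D1 d z = (P Zev)⁻¹.toReal * (P B).toReal := by
    unfold propScore
    rw [cond_apply hZevmeas]
    rw [show Zev ∩ {ω | Dreal Z D0 D1 ω = d} = B by
      ext ω
      simp only [Set.mem_inter_iff, Set.mem_setOf_eq, hBdef, hZevdef, Set.mem_setOf_eq]
      exact and_comm]
    rw [ENNReal.toReal_mul]
  have hpB_ne : (P B).toReal ≠ 0 := by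
    intro h
    rw [hps_eq, h, mul_zero] at hps
    exact lt_irrefl 0 hps
  have hpZinv_ne : (P Zev)⁻¹.toReal ≠ 0 := by
    intro h
    rw [hps_eq, h, zero_mul] at hps
    exact lt_irrefl 0 hps
  have hZev_ne : P Zev ≠ 0 := by
    intro h
    rw [h, ENNReal.inv_zero, ENNReal.toReal_top] at hpZinv_ne
    exact hpZinv_ne rfl
  have hB_ne : P B ≠ 0 := fun h => hpB_ne (by rw [h, ENNReal.toReal_zero])
  have hpB : 0 < (P B).toReal :=
    lt_of_le_of_ne ENNReal.toReal_nonneg (Ne.symm hpB_ne)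
  have hpZ : 0 < (P Zev).toReal :=
    ENNReal.toReal_pos hZev_ne (measure_ne_top P Zev)
  have hpT : 0 < (P Tev).toReal :=
    ENNReal.toReal_pos (ne_of_gt hTpos) (measure_ne_top P Tev)
  haveI : IsProbabilityMeasure (P[|B]) := cond_isProbabilityMeasure hB_ne
  set W : Ω → ℝ := Yreal K Z D0 D1 Y with hWdef
  have hWm : Measurable W := yreal_measurable hZm hD0m hD1m hYm
  set A' : Set Ω := Tev ∩ Zev with hA'def
  have hA'meas : MeasurableSet A' := hTevmeas.inter hZevmeas
  have hA'B : A' ⊆ B := by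
    intro ω hω
    exact ⟨hT ω hω.1.1 hω.1.2 hω.2, hω.2⟩
  have hW_eqB : ∀ ω ∈ B, W ω = Y z d ω :=
    fun ω hω => Yreal_eq hz hd1 hdK ω hω.2 hω.1
  have hcondB_def : (P[|B]) = (P B)⁻¹ • P.restrict B := rfl
  have hmemB : ∀ᵐ ω ∂(P[|B]), ω ∈ B := by
    rw [hcondB_def]
    exact Measure.ae_smul_measure (ae_restrict_mem hBmeas) _
  have hYae : ∀ᵐ ω ∂(P[|B]), Y z d ω ∈ Set.Icc yL yU :=
    (hBdd z hz d hd1 hdK).filter_mono cond_absolutelyContinuous.ae_le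
  have hWbdd : ∀ᵐ ω ∂(P[|B]), W ω ∈ Set.Icc yL yU := by
    filter_upwards [hmemB, hYae] with ω h1 h2
    rw [hW_eqB ω h1]
    exact h2
  have hrct := rct_facts hZm hD0m hD1m hYm hRCT hYint hz hd1 hdK a b
  have hq_eq : ((P[|B]) A').toReal
      = (P B).toReal⁻¹ * ((P Tev).toReal * (P Zev).toReal) := by
    rw [cond_apply hBmeas, Set.inter_eq_self_of_subset_right hA'B, hrct.1,
      ENNReal.toReal_mul, ENNReal.toReal_mul, ENNReal.toReal_inv]
  have hγq : γ ≤ ((P[|B]) A').toReal := by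
    rw [hq_eq]
    have h2 : γ * (P B).toReal ≤ (P Tev).toReal * (P Zev).toReal := by
      have h3 := mul_le_mul_of_nonneg_right hγ hpZ.le
      rw [hps_eq, ENNReal.toReal_inv] at h3
      calc γ * (P B).toReal = γ * ((P Zev).toReal⁻¹ * (P B).toReal) * (P Zev).toReal := by
            field_simp
        _ ≤ (P Tev).toReal * (P Zev).toReal := h3
    rw [inv_mul_eq_div, le_div_iff₀ hpB]
    exact h2
  have htrim := trim_bounds (P[|B]) hWm hyLU hWbdd hA'meas hγ0 hγq
  -- identify the middle term
  have hsetint : ∫ ω in A', W ω ∂(P[|B])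
      = (P B).toReal⁻¹ * ((P Zev).toReal * ∫ ω in Tev, Y z d ω ∂P) := by
    rw [hcondB_def, Measure.restrict_smul, integral_smul_measure,
      Measure.restrict_restrict hA'meas, Set.inter_eq_self_of_subset_left hA'B]
    rw [setIntegral_congr_fun hA'meas (fun ω hω => hW_eqB ω (hA'B hω))]
    rw [show ∫ ω in A', Y z d ω ∂P
        = (P Zev).toReal * ∫ ω in Tev, Y z d ω ∂P from hrct.2]
    rw [ENNReal.toReal_inv, smul_eq_mul]
  have hcondT : ∫ ω, Y z d ω ∂(P[|Tev])
      = (P Tev).toReal⁻¹ * ∫ ω in Tev, Y z d ω ∂P := by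
    rw [show (P[|Tev]) = (P Tev)⁻¹ • P.restrict Tev from rfl, integral_smul_measure,
      ENNReal.toReal_inv, smul_eq_mul]
  have hmid : ((P[|B]) A').toReal⁻¹ * ∫ ω in A', W ω ∂(P[|B])
      = ∫ ω, Y z d ω ∂(P[|Tev]) := by
    rw [hq_eq, hsetint, hcondT]
    field_simp
  constructor
  · have h := htrim.1
    rw [hmid] at h
    exact h
  · have h := htrim.2
    rw [hmid] at h
    exact h

lemma cond_integral_bounds {Ω : Type*} [MeasurableSpace Ω] (P : Measure Ω)
    [IsProbabilityMeasure P] {T : Set Ω} (hT_ne : P T ≠ 0)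
    {f : Ω → ℝ} (hfm : Measurable f) {yL yU : ℝ}
    (hbdd : ∀ᵐ ω ∂P, f ω ∈ Set.Icc yL yU) :
    Integrable f (P[|T]) ∧ yL ≤ ∫ ω, f ω ∂(P[|T]) ∧ ∫ ω, f ω ∂(P[|T]) ≤ yU := by
  haveI : IsProbabilityMeasure (P[|T]) := cond_isProbabilityMeasure hT_ne
  have hae : ∀ᵐ ω ∂(P[|T]), f ω ∈ Set.Icc yL yU :=
    hbdd.filter_mono cond_absolutelyContinuous.ae_le
  have hint : Integrable f (P[|T]) := by
    apply Integrable.mono' (integrable_const (max ‖yL‖ ‖yU‖)) hfm.aestronglyMeasurable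
    filter_upwards [hae] with ω hω
    rw [Real.norm_eq_abs]
    exact abs_le_max_abs_abs hω.1 hω.2
  refine ⟨hint, ?_, ?_⟩
  · have := integral_mono_ae (integrable_const yL) hint (by
      filter_upwards [hae] with ω hω; exact hω.1)
    simpa using this
  · have := integral_mono_ae hint (integrable_const yU) (by
      filter_upwards [hae] with ω hω; exact hω.2)
    simpa using this

end Side

/-- validity of the multilayered bounds for the local controlled
indirect effect: under Assumption RCT, if the true response-type probability
vector lies in `Θ_I(R)` and the potential outcomes are supported in
`[y_L, y_U]`, then the LCIEs are bounded as stated. -/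
theorem multilayered_bounds_lcie
    {Ω : Type*} [MeasurableSpace Ω] (P : Measure Ω) [IsProbabilityMeasure P]
    (K : ℕ) (hK : 1 ≤ K)
    (Z D0 D1 : Ω → ℕ)
    (hZm : Measurable Z) (hD0m : Measurable D0) (hD1m : Measurable D1)
    (hZ01 : ∀ ω, Z ω ≤ 1) (hD0K : ∀ ω, D0 ω ≤ K) (hD1K : ∀ ω, D1 ω ≤ K)
    (hZpos : 0 < P {ω | Z ω = 1}) (hZlt : P {ω | Z ω = 1} < 1)
    (Y : ℕ → ℕ → Ω → ℝ)
    (hYm : ∀ z ≤ 1, ∀ d, 1 ≤ d → d ≤ K → Measurable (Y z d))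
    (hYint : ∀ z ≤ 1, ∀ d, 1 ≤ d → d ≤ K → Integrable (Y z d) P)
    (hRCT : RCT P K Y D0 D1 Z)
    (R : (ℕ × ℕ → ℝ) → Prop)
    (hTrue : (fun t : ℕ × ℕ => (P {ω | D0 ω = t.1 ∧ D1 ω = t.2}).toReal)
        ∈ ThetaI P K Z D0 D1 R)
    (yL yU : ℝ) (hyLU : yL ≤ yU)
    (hBdd : ∀ z ≤ 1, ∀ d, 1 ≤ d → d ≤ K → ∀ᵐ ω ∂P, Y z d ω ∈ Set.Icc yL yU)
    (d d' l : ℕ) (hd1 : 1 ≤ d) (hdK : d ≤ K) (hd'1 : 1 ≤ d') (hd'K : d' ≤ K)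
    (hdd' : d ≠ d') (hl1 : 1 ≤ l) (hlK : l ≤ K) :
    ((0 < P {ω | D0 ω = l ∧ D1 ω = d} →
        0 < propScore P Z D0 D1 d 1 →
        0 < pbar P K Z D0 D1 R (l, d) / propScore P Z D0 D1 d 1 →
      (lowerTrunc (FYcond P K Z D0 D1 Y d 1)
            (pbar P K Z D0 D1 R (l, d) / propScore P Z D0 D1 d 1) - yU
          ≤ ∫ ω, (Y 1 d ω - Y 1 d' ω) ∂(P[|{ω | D0 ω = l ∧ D1 ω = d}]))
        ∧ (∫ ω, (Y 1 d ω - Y 1 d' ω) ∂(P[|{ω | D0 ω = l ∧ D1 ω = d}])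
          ≤ upperTrunc (FYcond P K Z D0 D1 Y d 1)
              (pbar P K Z D0 D1 R (l, d) / propScore P Z D0 D1 d 1) - yL)))
    ∧ ((0 < P {ω | D0 ω = d ∧ D1 ω = l} →
        0 < propScore P Z D0 D1 d 0 →
        0 < pbar P K Z D0 D1 R (d, l) / propScore P Z D0 D1 d 0 →
      (lowerTrunc (FYcond P K Z D0 D1 Y d 0)
            (pbar P K Z D0 D1 R (d, l) / propScore P Z D0 D1 d 0) - yU
          ≤ ∫ ω, (Y 0 d ω - Y 0 d' ω) ∂(P[|{ω | D0 ω = d ∧ D1 ω = l}]))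
        ∧ (∫ ω, (Y 0 d ω - Y 0 d' ω) ∂(P[|{ω | D0 ω = d ∧ D1 ω = l}])
          ≤ upperTrunc (FYcond P K Z D0 D1 Y d 0)
              (pbar P K Z D0 D1 R (d, l) / propScore P Z D0 D1 d 0) - yL))) := by
  have hpbar_le : ∀ t : ℕ × ℕ, t.1 ≤ K → t.2 ≤ K →
      pbar P K Z D0 D1 R t ≤ (P {ω | D0 ω = t.1 ∧ D1 ω = t.2}).toReal := by
    intro t ht1 ht2
    apply csInf_le
    · refine ⟨0, ?_⟩
      rintro x ⟨p, hp, rfl⟩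
      exact hp.1 t (by
        simp only [Finset.mem_product, Finset.mem_range]
        omega)
    · exact ⟨_, hTrue, rfl⟩
  constructor
  · -- z = 1 case
    intro hTpos hps hγpos
    have hT1 : ∀ ω, D0 ω = l → D1 ω = d → Z ω = 1 → Dreal Z D0 D1 ω = d := by
      intro ω h0 h1 hZ
      unfold Dreal
      rw [hZ, h1]
      simp
    have hside := side_bound P K Z D0 D1 hZm hD0m hD1m Y hYm hYint hRCT hyLU hBdd
      (z := 1) (d := d) (a := l) (b := d) le_rfl hd1 hdK hT1 hTpos hps hγpos
      (by
        rw [div_mul_cancel₀ _ (ne_of_gt hps)]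
        exact hpbar_le (l, d) hlK hdK)
    have hT_ne : P {ω | D0 ω = l ∧ D1 ω = d} ≠ 0 := ne_of_gt hTpos
    have hb1 := cond_integral_bounds P hT_ne (hYm 1 le_rfl d hd1 hdK)
      (hBdd 1 le_rfl d hd1 hdK)
    have hb2 := cond_integral_bounds P hT_ne (hYm 1 le_rfl d' hd'1 hd'K)
      (hBdd 1 le_rfl d' hd'1 hd'K)
    have hsplit : ∫ ω, (Y 1 d ω - Y 1 d' ω) ∂(P[|{ω | D0 ω = l ∧ D1 ω = d}])
        = (∫ ω, Y 1 d ω ∂(P[|{ω | D0 ω = l ∧ D1 ω = d}]))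
          - ∫ ω, Y 1 d' ω ∂(P[|{ω | D0 ω = l ∧ D1 ω = d}]) :=
      integral_sub hb1.1 hb2.1
    rw [hsplit]
    constructor
    · linarith [hside.1, hb2.2.2]
    · linarith [hside.2, hb2.2.1]
  · -- z = 0 case
    intro hTpos hps hγpos
    have hT0 : ∀ ω, D0 ω = d → D1 ω = l → Z ω = 0 → Dreal Z D0 D1 ω = d := by
      intro ω h0 h1 hZ
      unfold Dreal
      rw [hZ, h0]
      simp
    have hside := side_bound P K Z D0 D1 hZm hD0m hD1m Y hYm hYint hRCT hyLU hBdd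
      (z := 0) (d := d) (a := d) (b := l) (Nat.zero_le 1) hd1 hdK hT0 hTpos hps hγpos
      (by
        rw [div_mul_cancel₀ _ (ne_of_gt hps)]
        exact hpbar_le (d, l) hdK hlK)
    have hT_ne : P {ω | D0 ω = d ∧ D1 ω = l} ≠ 0 := ne_of_gt hTpos
    have hb1 := cond_integral_bounds P hT_ne (hYm 0 (Nat.zero_le 1) d hd1 hdK)
      (hBdd 0 (Nat.zero_le 1) d hd1 hdK)
    have hb2 := cond_integral_bounds P hT_ne (hYm 0 (Nat.zero_le 1) d' hd'1 hd'K)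
      (hBdd 0 (Nat.zero_le 1) d' hd'1 hd'K)
    have hsplit : ∫ ω, (Y 0 d ω - Y 0 d' ω) ∂(P[|{ω | D0 ω = d ∧ D1 ω = l}])
        = (∫ ω, Y 0 d ω ∂(P[|{ω | D0 ω = d ∧ D1 ω = l}]))
          - ∫ ω, Y 0 d' ω ∂(P[|{ω | D0 ω = d ∧ D1 ω = l}]) :=
      integral_sub hb1.1 hb2.1
    rw [hsplit]
    constructor
    · linarith [hside.1, hb2.2.2]
    · linarith [hside.2, hb2.2.1]
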